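/- Let α ∈ (0,1), β = √(1−α²), and let c ∈ ℂ \ {0}. Define w(x,t) = (c/√t) exp( i(β|c|²/2) ln t + (iβ − α) x²/(4t) ) for x ∈ ℝ, t > 0, and let φ be a continuous compactly supported function on ℝ with φ(0) = 0 (equivalently, with compact support in ℝ \ {0}). Then ∫_ℝ w(x,t) φ(x) dx → 0 as t → 0⁺. -/

import Mathlib

open MeasureTheory Filter Complex

/-- For the singular solution `w(x,t) = (c/√t) exp(i(β|c|²/2) ln t + (iβ−α)x²/(4t))`
with `α ∈ (0,1)`, `β = √(1−α²)`, and any continuous compactly supported `φ` with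
`φ(0) = 0`, one has `∫ w(x,t)φ(x) dx → 0` as `t → 0⁺`. -/
theorem stmt_15 (α β : ℝ) (hα : α ∈ Set.Ioo (0:ℝ) 1) (hβ : β = Real.sqrt (1 - α ^ 2))
    (c : ℂ) (hc : c ≠ 0)
    (w : ℝ → ℝ → ℂ)
    (hw : ∀ (x t : ℝ), 0 < t → w x t = (c / (Real.sqrt t : ℂ)) *
      Complex.exp (Complex.I * (β * ‖c‖ ^ 2 / 2) * Real.log t +
        (Complex.I * β - α) * x ^ 2 / (4 * t)))
    (φ : ℝ → ℂ) (hφc : Continuous φ) (hφs : HasCompactSupport φ) (hφ0 : φ 0 = 0) :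
    Tendsto (fun t : ℝ => ∫ x : ℝ, w x t * φ x)
      (nhdsWithin 0 (Set.Ioi 0)) (nhds 0) := by
  obtain ⟨hα0, hα1⟩ := hα
  obtain ⟨C, hC⟩ := hφc.bounded_above_of_compact_support hφs
  set l : Filter ℝ := nhdsWithin 0 (Set.Ioi 0) with hl
  set F : ℝ → ℂ := fun t => ∫ y : ℝ,
      Complex.exp ((Complex.I * β - α) * (y : ℂ) ^ 2 / 4) * φ (Real.sqrt t * y) with hFdef
  have hre : ∀ y : ℝ, ((Complex.I * β - α) * (y : ℂ) ^ 2 / 4).re = -(α / 4) * y ^ 2 := by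
    intro y
    have h : (Complex.I * β - α) * (y : ℂ) ^ 2 / 4
        = ((-(α / 4) * y ^ 2 : ℝ) : ℂ) + Complex.I * ((β * y ^ 2 / 4 : ℝ) : ℂ) := by
      push_cast; ring
    rw [h, Complex.add_re, Complex.ofReal_re]
    simp only [Complex.mul_re, Complex.I_re, Complex.I_im, Complex.ofReal_re, Complex.ofReal_im]
    ring
  have hF : Tendsto F l (nhds 0) := by
    have h0 : (0 : ℂ) = ∫ _ : ℝ, (0 : ℂ) := by simp
    rw [h0]
    apply MeasureTheory.tendsto_integral_filter_of_dominated_convergence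
      (bound := fun y => max C 0 * Real.exp (-(α / 4) * y ^ 2))
    · filter_upwards with t
      have hc1 : Continuous fun y : ℝ => (Complex.I * β - α) * (y : ℂ) ^ 2 / 4 :=
        (continuous_const.mul (Complex.continuous_ofReal.pow 2)).div_const 4
      exact ((Complex.continuous_exp.comp hc1).mul
        (hφc.comp (continuous_const.mul continuous_id))).aestronglyMeasurable
    · filter_upwards with t
      filter_upwards with y
      rw [norm_mul, Complex.norm_exp, hre]
      rw [mul_comm (max C 0)]
      exact mul_le_mul_of_nonneg_left ((hC _).trans (le_max_left _ _)) (Real.exp_nonneg _)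
    · exact (integrable_exp_neg_mul_sq (by positivity : (0:ℝ) < α / 4)).const_mul _
    · filter_upwards with y
      have hsq : Tendsto (fun t : ℝ => Real.sqrt t * y) l (nhds 0) := by
        have := ((Real.continuous_sqrt.tendsto 0).mono_left
          (nhdsWithin_le_nhds (s := Set.Ioi (0:ℝ)))).mul_const y
        simpa using this
      have hlim := (hφc.tendsto 0).comp hsq
      rw [hφ0] at hlim
      have := hlim.const_mul (Complex.exp ((Complex.I * β - α) * (y : ℂ) ^ 2 / 4))
      simpa using this
  have key : ∀ t ∈ Set.Ioi (0:ℝ),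
      (∫ x : ℝ, w x t * φ x)
        = (c * Complex.exp (Complex.I * (β * ‖c‖ ^ 2 / 2) * Real.log t)) * F t := by
    intro t ht
    have ht' : (0:ℝ) < t := ht
    have ha : 0 < Real.sqrt t := Real.sqrt_pos.mpr ht'
    have hsq : (Real.sqrt t) ^ 2 = t := Real.sq_sqrt ht'.le
    have h1 := MeasureTheory.Measure.integral_comp_mul_left (fun x => w x t * φ x) (Real.sqrt t)
    have h2 : (∫ x : ℝ, w x t * φ x)
        = Real.sqrt t • ∫ y : ℝ, w (Real.sqrt t * y) t * φ (Real.sqrt t * y) := by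
      rw [h1, abs_of_pos (inv_pos.mpr ha), smul_smul, mul_inv_cancel₀ ha.ne', one_smul]
    rw [h2]
    have h3 : ∀ y : ℝ, w (Real.sqrt t * y) t * φ (Real.sqrt t * y)
        = ((c / (Real.sqrt t : ℂ)) *
            Complex.exp (Complex.I * (β * ‖c‖ ^ 2 / 2) * Real.log t)) *
          (Complex.exp ((Complex.I * β - α) * (y : ℂ) ^ 2 / 4) * φ (Real.sqrt t * y)) := by
      intro y
      rw [hw _ _ ht', Complex.exp_add]
      have hexp : (Complex.I * β - α) * ((Real.sqrt t * y : ℝ) : ℂ) ^ 2 / (4 * t)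
          = (Complex.I * β - α) * (y : ℂ) ^ 2 / 4 := by
        push_cast
        have htc : (t : ℂ) ≠ 0 := by exact_mod_cast ht'.ne'
        have : ((Real.sqrt t : ℝ) : ℂ) ^ 2 = (t : ℂ) := by exact_mod_cast hsq
        rw [mul_pow, this]
        field_simp
      rw [hexp]
      ring
    simp_rw [h3]
    rw [MeasureTheory.integral_const_mul]
    simp only [hFdef]
    rw [Complex.real_smul]
    have hst : ((Real.sqrt t : ℝ) : ℂ) ≠ 0 := by exact_mod_cast ha.ne'
    field_simp
  have heq : (fun t : ℝ => ∫ x : ℝ, w x t * φ x) =ᶠ[l]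
      fun t => (c * Complex.exp (Complex.I * (β * ‖c‖ ^ 2 / 2) * Real.log t)) * F t := by
    filter_upwards [self_mem_nhdsWithin] with t ht using key t ht
  rw [tendsto_congr' heq]
  rw [tendsto_zero_iff_norm_tendsto_zero]
  have hnorm : ∀ t : ℝ,
      ‖(c * Complex.exp (Complex.I * (β * ‖c‖ ^ 2 / 2) * Real.log t)) * F t‖
        = ‖c‖ * ‖F t‖ := by
    intro t
    rw [norm_mul, norm_mul, Complex.norm_exp]
    have h4 : Complex.I * (β * ‖c‖ ^ 2 / 2) * (Real.log t : ℂ)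
        = Complex.I * ((β * ‖c‖ ^ 2 / 2 * Real.log t : ℝ) : ℂ) := by
      push_cast; ring
    rw [h4]
    have h5 : (Complex.I * ((β * ‖c‖ ^ 2 / 2 * Real.log t : ℝ) : ℂ)).re = 0 := by
      simp only [Complex.mul_re, Complex.I_re, Complex.I_im, Complex.ofReal_re,
        Complex.ofReal_im]
      ring
    rw [h5, Real.exp_zero, mul_one]
  simp_rw [hnorm]
  have := hF.norm.const_mul ‖c‖
  simpa using this
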